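/- If in phase 1 the process stops when the accumulated size s of popped-max layer products first reaches s ≥ k, and layers of X and Y grow geometrically with ratio α, then s < k + |X^(u)|·|Y^(v)| where (u,v) is the last layer product counted, and moreover s ∈ O(k): specifically s ≤ k + α·k when k > 1 (w.l.o.g. u > 1), and s = 1 when k = 1. -/

import Mathlib

/-- In phase 1, max layer-product tuples with indices `uv t` are
popped in order t = 0, 1, ..., T, stopping at the first time T at which the
accumulated size s = Σ_{t ≤ T} |X^(u_t)|·|Y^(v_t)| reaches s ≥ k.  Layer sizes
grow geometrically with ratio α > 1 starting from size 1, and popping a max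
tuple with a coordinate > 1 requires having popped the max tuple of the
neighboring smaller layer product (convexity).  Then s < k + |X^(u_T)|·|Y^(v_T)|,
and s ∈ O(k): s = 1 when k = 1, and s ≤ k + α·k when k > 1. -/
theorem phase1_size_bound (α : ℝ) (hα : 1 < α) (k : ℕ) (hk : 1 ≤ k)
    (sx sy : ℕ → ℝ) (hsx1 : sx 1 = 1) (hsy1 : sy 1 = 1)
    (hsxpos : ∀ u, 0 < sx u) (hsypos : ∀ v, 0 < sy v)
    (hsxgeo : ∀ u, 1 ≤ u → sx (u + 1) = α * sx u)
    (hsygeo : ∀ v, 1 ≤ v → sy (v + 1) = α * sy v)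
    (uv : ℕ → ℕ × ℕ) (T : ℕ)
    (hvalid : ∀ t ≤ T, 1 ≤ (uv t).1 ∧ 1 ≤ (uv t).2)
    (hstart : uv 0 = (1, 1))
    (hinj : ∀ t ≤ T, ∀ t' ≤ T, uv t = uv t' → t = t')
    (hconv1 : ∀ t ≤ T, 1 < (uv t).1 → ∃ t' < t, uv t' = ((uv t).1 - 1, (uv t).2))
    (hconv2 : ∀ t ≤ T, 1 < (uv t).2 → ∃ t' < t, uv t' = ((uv t).1, (uv t).2 - 1))
    (hwlog : 1 < k → 1 < (uv T).1 ∨ 1 < (uv T).2)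
    (hstop : (k : ℝ) ≤ ∑ t ∈ Finset.range (T + 1), sx (uv t).1 * sy (uv t).2)
    (hfirst : (∑ t ∈ Finset.range T, sx (uv t).1 * sy (uv t).2) < k) :
    (∑ t ∈ Finset.range (T + 1), sx (uv t).1 * sy (uv t).2)
        < (k : ℝ) + sx (uv T).1 * sy (uv T).2 ∧
    (k = 1 → (∑ t ∈ Finset.range (T + 1), sx (uv t).1 * sy (uv t).2) = 1) ∧
    (1 < k → (∑ t ∈ Finset.range (T + 1), sx (uv t).1 * sy (uv t).2)
        ≤ (k : ℝ) + α * k) := by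
  have hsum : ∀ n, (∑ t ∈ Finset.range (n + 1), sx (uv t).1 * sy (uv t).2)
      = (∑ t ∈ Finset.range n, sx (uv t).1 * sy (uv t).2) + sx (uv n).1 * sy (uv n).2 :=
    fun n => Finset.sum_range_succ _ n
  have hpos : ∀ t, 0 < sx (uv t).1 * sy (uv t).2 := fun t =>
    mul_pos (hsxpos _) (hsypos _)
  refine ⟨by rw [hsum]; linarith [hpos T], ?_, ?_⟩
  · intro hk1
    have hT0 : T = 0 := by
      by_contra h
      have h1 : 0 < T := Nat.pos_of_ne_zero h
      have h0 : sx (uv 0).1 * sy (uv 0).2 ≤ ∑ t ∈ Finset.range T, sx (uv t).1 * sy (uv t).2 :=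
        Finset.single_le_sum (fun t _ => (hpos t).le) (Finset.mem_range.mpr h1)
      rw [hstart] at h0
      simp [hsx1, hsy1] at h0
      rw [hk1] at hfirst
      push_cast at hfirst
      linarith
    subst hT0
    simp [hstart, hsx1, hsy1]
  · intro hk1
    have hαpos : (0:ℝ) < α := by linarith
    have key : sx (uv T).1 * sy (uv T).2 ≤ α * k := by
      rcases hwlog hk1 with hu | hv
      · obtain ⟨t', ht', heq⟩ := hconv1 T le_rfl hu
        have hgeo : sx (uv T).1 = α * sx ((uv T).1 - 1) := by
          have h1 : 1 ≤ (uv T).1 - 1 := by omega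
          have := hsxgeo ((uv T).1 - 1) h1
          rwa [Nat.sub_add_cancel (by omega : 1 ≤ (uv T).1)] at this
        have hterm : sx (uv t').1 * sy (uv t').2 = sx ((uv T).1 - 1) * sy (uv T).2 := by
          rw [heq]
        have hle : sx (uv t').1 * sy (uv t').2 ≤ ∑ t ∈ Finset.range T, sx (uv t).1 * sy (uv t).2 :=
          Finset.single_le_sum (fun t _ => (hpos t).le) (Finset.mem_range.mpr ht')
        calc sx (uv T).1 * sy (uv T).2 = α * (sx ((uv T).1 - 1) * sy (uv T).2) := by
              rw [hgeo]; ring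
          _ ≤ α * k := by
              rw [← hterm]; exact mul_le_mul_of_nonneg_left (hle.trans hfirst.le) hαpos.le
      · obtain ⟨t', ht', heq⟩ := hconv2 T le_rfl hv
        have hgeo : sy (uv T).2 = α * sy ((uv T).2 - 1) := by
          have h1 : 1 ≤ (uv T).2 - 1 := by omega
          have := hsygeo ((uv T).2 - 1) h1
          rwa [Nat.sub_add_cancel (by omega : 1 ≤ (uv T).2)] at this
        have hterm : sx (uv t').1 * sy (uv t').2 = sx (uv T).1 * sy ((uv T).2 - 1) := by
          rw [heq]
        have hle : sx (uv t').1 * sy (uv t').2 ≤ ∑ t ∈ Finset.range T, sx (uv t).1 * sy (uv t).2 :=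
          Finset.single_le_sum (fun t _ => (hpos t).le) (Finset.mem_range.mpr ht')
        calc sx (uv T).1 * sy (uv T).2 = α * (sx (uv T).1 * sy ((uv T).2 - 1)) := by
              rw [hgeo]; ring
          _ ≤ α * k := by
              rw [← hterm]; exact mul_le_mul_of_nonneg_left (hle.trans hfirst.le) hαpos.le
    rw [hsum]; linarith
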